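/- Let q ≥ 1 and β > 0, and set Z = (q − 1) e^{−β} + e^{β(q−1)}. Then (e^{−β}/Z) · [ qβ + Σ_{k=1}^∞ (2β/(k+1)) · q^k β^k / k! ] = (1/q) · (2 e^{βq} − 2 + βq(q − 2)) / (e^{βq} + q − 1). Equivalently, if D has mass function P(D = k) = (e^{−β}/Z) q^{max(k,1)} β^k / k!, then β · P(D = 0) + Σ_{k=1}^∞ (2β/(k+1)) · P(D = k) = q F_q(β, λ) / λ, where F_q(β, λ) = (λ/q²) · (2 e^{βq} − 2 + βq(q − 2)) / (e^{βq} + q − 1). -/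

import Mathlib

open Real

/-- The mass function of the number `D` of cuts on a time-line in the product random-cluster
model on `K_n × [0, β]`: `P(D = k) = e^{−β} q^{max(k,1)} β^k / (k! · Z)` with
`Z = (q − 1)e^{−β} + e^{β(q−1)}`. -/
noncomputable def cutMass (q β : ℝ) (k : ℕ) : ℝ :=
  exp (-β) * q ^ (max k 1) * β ^ k / (Nat.factorial k * ((q - 1) * exp (-β) + exp (β * (q - 1))))

/-- `F_q(β, λ) = (λ/q²) · (2e^{βq} − 2 + βq(q − 2)) / (e^{βq} + q − 1)`. -/
noncomputable def contFq (q β lam : ℝ) : ℝ :=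
  lam / q ^ 2 * ((2 * exp (β * q) - 2 + β * q * (q - 2)) / (exp (β * q) + q - 1))

lemma mytsum_shift2 (x : ℝ) :
    ∑' k : ℕ, x ^ (k + 2) / (Nat.factorial (k + 2)) = exp x - 1 - x := by
  have hsum : Summable (fun n : ℕ => x ^ n / (Nat.factorial n)) :=
    Real.summable_pow_div_factorial x
  have hexp : exp x = ∑' n : ℕ, x ^ n / (Nat.factorial n) := by
    rw [Real.exp_eq_exp_ℝ, NormedSpace.exp_eq_tsum_div]
  have h1 : ∑' n : ℕ, x ^ n / (Nat.factorial n)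
      = 1 + ∑' n : ℕ, x ^ (n + 1) / (Nat.factorial (n + 1)) := by
    rw [hsum.tsum_eq_zero_add]; norm_num
  have hsum1 : Summable (fun n : ℕ => x ^ (n + 1) / (Nat.factorial (n + 1))) :=
    (summable_nat_add_iff 1).2 hsum
  have h2 : ∑' n : ℕ, x ^ (n + 1) / (Nat.factorial (n + 1))
      = x + ∑' n : ℕ, x ^ (n + 2) / (Nat.factorial (n + 2)) := by
    rw [hsum1.tsum_eq_zero_add]; norm_num
  rw [hexp, h1, h2]; ring

/-- For `q ≥ 1`, `β > 0`, with `Z = (q−1)e^{−β} + e^{β(q−1)}`: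
`(e^{−β}/Z)·[qβ + Σ_{k≥1} (2β/(k+1)) q^k β^k / k!]
  = (1/q)·(2e^{βq} − 2 + βq(q−2))/(e^{βq} + q − 1)`.
Equivalently, for the mass function `p(k) = (e^{−β}/Z) q^{max(k,1)} β^k / k!`,
`β·p(0) + Σ_{k≥1} (2β/(k+1))·p(k) = q F_q(β,λ)/λ`. (In the sums below the index `k ≥ 1` is
written as `k + 1` with `k` ranging over `ℕ`.) -/
theorem mean_cutfree_interval_length (q β : ℝ) (hq : 1 ≤ q) (hβ : 0 < β) :
    (exp (-β) / ((q - 1) * exp (-β) + exp (β * (q - 1)))) *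
        (q * β + ∑' k : ℕ,
          (2 * β / ((k : ℝ) + 2)) * (q ^ (k + 1) * β ^ (k + 1) / (Nat.factorial (k + 1))))
      = (1 / q) * ((2 * exp (β * q) - 2 + β * q * (q - 2)) / (exp (β * q) + q - 1)) ∧
    (∀ lam : ℝ, 0 < lam →
      β * cutMass q β 0 + ∑' k : ℕ, (2 * β / ((k : ℝ) + 2)) * cutMass q β (k + 1)
        = q * contFq q β lam / lam) := by
  have hq0 : q ≠ 0 := by linarith
  have hE : (0:ℝ) < exp (β * q) := exp_pos _
  have hD : exp (β * q) + q - 1 ≠ 0 := by nlinarith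
  have hterm : ∀ k : ℕ,
      (2 * β / ((k : ℝ) + 2)) * (q ^ (k + 1) * β ^ (k + 1) / (Nat.factorial (k + 1)))
        = (2 / q) * ((β * q) ^ (k + 2) / (Nat.factorial (k + 2))) := by
    intro k
    have h2 : ((k : ℝ) + 2) ≠ 0 := by positivity
    have hf : ((Nat.factorial (k + 1) : ℝ)) ≠ 0 :=
      Nat.cast_ne_zero.2 (Nat.factorial_ne_zero _)
    rw [show k + 2 = (k + 1) + 1 from rfl, Nat.factorial_succ (k + 1), mul_pow]
    push_cast
    field_simp
    ring
  have hS : (∑' k : ℕ,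
      (2 * β / ((k : ℝ) + 2)) * (q ^ (k + 1) * β ^ (k + 1) / (Nat.factorial (k + 1))))
        = (2 / q) * (exp (β * q) - 1 - β * q) := by
    rw [tsum_congr hterm, tsum_mul_left, mytsum_shift2]
  have hZ : (q - 1) * exp (-β) + exp (β * (q - 1))
      = exp (-β) * (exp (β * q) + q - 1) := by
    rw [show β * (q - 1) = β * q + -β by ring, exp_add]
    ring
  have hexpβ : exp (-β) ≠ 0 := (exp_pos _).ne'
  have main : (exp (-β) / ((q - 1) * exp (-β) + exp (β * (q - 1)))) *
        (q * β + ∑' k : ℕ,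
          (2 * β / ((k : ℝ) + 2)) * (q ^ (k + 1) * β ^ (k + 1) / (Nat.factorial (k + 1))))
      = (1 / q) * ((2 * exp (β * q) - 2 + β * q * (q - 2)) / (exp (β * q) + q - 1)) := by
    rw [hS, hZ]
    field_simp
    ring
  refine ⟨main, fun lam hlam => ?_⟩
  have hc0 : cutMass q β 0
      = (exp (-β) / ((q - 1) * exp (-β) + exp (β * (q - 1)))) * q := by
    simp [cutMass, div_eq_mul_inv]
    ring
  have hck : ∀ k : ℕ, cutMass q β (k + 1)
      = (exp (-β) / ((q - 1) * exp (-β) + exp (β * (q - 1)))) *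
          (q ^ (k + 1) * β ^ (k + 1) / (Nat.factorial (k + 1))) := by
    intro k
    have hm : max (k + 1) 1 = k + 1 := Nat.max_eq_left (Nat.succ_le_succ (Nat.zero_le k))
    simp [cutMass, hm, div_eq_mul_inv, mul_inv]
    ring
  have hsplit : β * cutMass q β 0 + ∑' k : ℕ, (2 * β / ((k : ℝ) + 2)) * cutMass q β (k + 1)
      = (exp (-β) / ((q - 1) * exp (-β) + exp (β * (q - 1)))) *
        (q * β + ∑' k : ℕ,
          (2 * β / ((k : ℝ) + 2)) * (q ^ (k + 1) * β ^ (k + 1) / (Nat.factorial (k + 1)))) := by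
    have : ∀ k : ℕ, (2 * β / ((k : ℝ) + 2)) * cutMass q β (k + 1)
        = (exp (-β) / ((q - 1) * exp (-β) + exp (β * (q - 1)))) *
          ((2 * β / ((k : ℝ) + 2)) * (q ^ (k + 1) * β ^ (k + 1) / (Nat.factorial (k + 1)))) := by
      intro k; rw [hck k]; ring
    rw [tsum_congr this, tsum_mul_left, hc0]
    ring
  rw [hsplit, main, contFq]
  field_simp
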